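/- arXiv:0910.4200 — 4 statements merged into one kernel-verified Lean document; each statement's English description precedes it below -/
import Mathlib

section
/- Let M be an (n+1)×(n+1) real matrix whose first column is the all-ones vector and whose remaining n columns b_1, ..., b_n are 0/1 vectors, where i_j denotes the number of ones in column b_j. Then (det M)^2 ≤ (n+1)^{1-n} · (∏_{j=1}^n i_j) · (∏_{j=1}^n (n+1-i_j)). -/
open Finset


lemma hadamard_cols (m : ℕ) (N : Matrix (Fin (m+1)) (Fin (m+1)) ℝ) :
    N.det ^ 2 ≤ ∏ q, ∑ k, N k q ^ 2 := by
  classical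
  haveI iwf : WellFoundedLT (Fin (m+1)) := inferInstance
  set f : Fin (m+1) → EuclideanSpace ℝ (Fin (m+1)) :=
    fun q => (WithLp.equiv 2 _).symm (fun k => N k q) with hf
  have hcard : Module.finrank ℝ (EuclideanSpace ℝ (Fin (m+1))) = Fintype.card (Fin (m+1)) := by
    simp
  set e := EuclideanSpace.basisFun (Fin (m+1)) ℝ with he
  set b := @InnerProductSpace.gramSchmidtOrthonormalBasis ℝ _ _ _ _ (Fin (m+1)) _ _ iwf _ _ hcard f with hb
  have hdetf : e.toBasis.det f = N.det := by
    rw [Module.Basis.det_apply]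
    congr 1
  have hchain : e.toBasis.toMatrix (⇑b.toBasis) * b.toBasis.toMatrix f = e.toBasis.toMatrix f :=
    Module.Basis.toMatrix_mul_toMatrix _ _ _
  have hsplit : e.toBasis.det f = e.toBasis.det b.toBasis * b.toBasis.det f := by
    rw [Module.Basis.det_apply, Module.Basis.det_apply, Module.Basis.det_apply, ← hchain, Matrix.det_mul]
  have habs : |e.toBasis.det f| ≤ ∏ q, ‖f q‖ := by
    have h1 : e.toBasis.det ⇑b.toBasis = 1 ∨ e.toBasis.det ⇑b.toBasis = -1 := by
      have := e.det_to_matrix_orthonormalBasis_real b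
      simpa using this
    have h2 : b.toBasis.det f = ∏ q, inner ℝ (b q) (f q) :=
      @InnerProductSpace.gramSchmidtOrthonormalBasis_det ℝ _ _ _ _ (Fin (m+1)) _ _ iwf _ _ hcard f _
    have h3 : |b.toBasis.det f| ≤ ∏ q, ‖f q‖ := by
      rw [h2]
      calc |∏ q, (inner ℝ (b q) (f q) : ℝ)| = ∏ q, |(inner ℝ (b q) (f q) : ℝ)| :=
            Finset.abs_prod _ _
        _ ≤ ∏ q, ‖f q‖ := by
            apply Finset.prod_le_prod (fun q _ => abs_nonneg _)
            intro q _
            calc |(inner ℝ (b q) (f q) : ℝ)| ≤ ‖b q‖ * ‖f q‖ := abs_real_inner_le_norm _ _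
              _ = ‖f q‖ := by rw [b.orthonormal.1 q, one_mul]
    rw [hsplit, abs_mul]
    rw [OrthonormalBasis.coe_toBasis] at h1
    rcases h1 with h | h <;> simp [h, h3]
  have hsq : N.det ^ 2 ≤ (∏ q, ‖f q‖) ^ 2 := by
    rw [← hdetf, ← sq_abs]
    exact pow_le_pow_left₀ (abs_nonneg _) habs 2
  calc N.det ^ 2 ≤ (∏ q, ‖f q‖) ^ 2 := hsq
    _ = ∏ q, ‖f q‖ ^ 2 := by rw [Finset.prod_pow]
    _ = ∏ q, ∑ k, N k q ^ 2 := by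
        apply Finset.prod_congr rfl
        intro q _
        rw [EuclideanSpace.norm_eq, Real.sq_sqrt (by positivity)]
        simp [f, sq_abs]

theorem det_sq_le_prod (n : ℕ) (M : Matrix (Fin (n + 1)) (Fin (n + 1)) ℝ)
    (hcol0 : ∀ k, M k 0 = 1)
    (h01 : ∀ (j : Fin n) (k : Fin (n + 1)), M k j.succ = 0 ∨ M k j.succ = 1)
    (i : Fin n → ℕ)
    (hi : ∀ j : Fin n, i j = (univ.filter (fun k : Fin (n + 1) => M k j.succ = 1)).card) :
    (M.det) ^ 2 ≤ ((n : ℝ) + 1) ^ ((1 : ℤ) - n) *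
      (∏ j : Fin n, (i j : ℝ)) * (∏ j : Fin n, ((n : ℝ) + 1 - i j)) := by
  classical
  have hnpos : (0:ℝ) < (n:ℝ) + 1 := by positivity
  set c : Fin (n+1) → ℝ := fun q => Fin.cases 0 (fun j => -((i j : ℝ)/((n:ℝ)+1))) q with hc
  have hc0 : c 0 = 0 := rfl
  have hcs : ∀ j : Fin n, c j.succ = -((i j : ℝ)/((n:ℝ)+1)) := fun j => rfl
  set N : Matrix (Fin (n+1)) (Fin (n+1)) ℝ := Matrix.of (fun k q => M k q + c q) with hNdef
  set v : Matrix (Fin (n+1)) (Fin (n+1)) ℝ := Matrix.of (fun p q => if p = 0 then c q else 0)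
    with hv
  have hMv : M * v = Matrix.of (fun k q => c q) := by
    ext k q
    rw [Matrix.mul_apply]
    rw [Finset.sum_eq_single 0]
    · simp [hv, hcol0 k]
    · intro p _ hp
      simp [hv, hp]
    · simp
  have hdetN : N.det = M.det := by
    have hN' : N = M * (1 + v) := by
      rw [Matrix.mul_add, Matrix.mul_one, hMv]
      ext k q
      simp [hNdef]
    have ht : (1 + v).BlockTriangular id := by
      intro p q hlt
      have hpq : p ≠ q := (ne_of_gt hlt)
      have hp0 : p ≠ 0 := by
        rintro rfl
        exact absurd hlt (by simp)
      simp [Matrix.add_apply, Matrix.one_apply, hpq, hp0, hv]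
    have hd1 : (1 + v).det = 1 := by
      rw [Matrix.det_of_upperTriangular ht]
      apply Finset.prod_eq_one
      intro p _
      rcases eq_or_ne p 0 with h | h
      · simp [h, Matrix.add_apply, Matrix.one_apply, hv, hc0]
      · simp [Matrix.add_apply, Matrix.one_apply, hv, h]
    rw [hN', Matrix.det_mul, hd1, mul_one]
  have H := hadamard_cols n N
  rw [hdetN] at H
  refine H.trans_eq ?_
  have hS0 : ∑ k, N k 0 ^ 2 = (n:ℝ) + 1 := by
    simp [hNdef, hcol0, hc0, Finset.sum_const, Finset.card_univ]
  have hsum1 : ∀ j : Fin n, ∑ k, M k j.succ = (i j : ℝ) := by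
    intro j
    have : ∑ k, M k j.succ = ∑ k, (if M k j.succ = 1 then (1:ℝ) else 0) :=
      Finset.sum_congr rfl fun k _ => by rcases h01 j k with h | h <;> simp [h]
    rw [this, Finset.sum_boole, hi j]
  have hsum2 : ∀ j : Fin n, ∑ k, (M k j.succ) ^ 2 = (i j : ℝ) := by
    intro j
    have : ∑ k, (M k j.succ) ^ 2 = ∑ k, (if M k j.succ = 1 then (1:ℝ) else 0) :=
      Finset.sum_congr rfl fun k _ => by rcases h01 j k with h | h <;> simp [h]
    rw [this, Finset.sum_boole, hi j]
  have hSj : ∀ j : Fin n, ∑ k, N k j.succ ^ 2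
      = (i j : ℝ) * (((n:ℝ) + 1) - (i j : ℝ)) / ((n:ℝ) + 1) := by
    intro j
    set t : ℝ := -((i j : ℝ)/((n:ℝ)+1)) with hct
    have step : ∑ k, N k j.succ ^ 2
        = (∑ k, (M k j.succ) ^ 2) + 2 * t * (∑ k, M k j.succ) + ((n:ℝ)+1) * t ^ 2 := by
      have e1 : ∀ k, N k j.succ ^ 2 = (M k j.succ) ^ 2 + 2 * t * (M k j.succ) + t ^ 2 := by
        intro k
        simp only [hNdef, Matrix.of_apply, hcs j, ← hct]
        ring
      rw [Finset.sum_congr rfl fun k _ => e1 k]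
      rw [Finset.sum_add_distrib, Finset.sum_add_distrib, ← Finset.mul_sum,
        Finset.sum_const, Finset.card_univ, Fintype.card_fin]
      push_cast
      ring
    rw [step, hsum1 j, hsum2 j, hct]
    field_simp
    ring
  rw [Fin.prod_univ_succ, hS0, Finset.prod_congr rfl fun j _ => hSj j]
  have hz : ((n:ℝ) + 1) ^ ((1:ℤ) - n) = ((n:ℝ) + 1) / ((n:ℝ) + 1) ^ n := by
    rw [zpow_sub₀ hnpos.ne', zpow_one, zpow_natCast]
  rw [hz, Finset.prod_div_distrib, Finset.prod_const, Finset.card_univ,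
    Finset.prod_mul_distrib]
  simp only [Fintype.card_fin]
  field_simp
end

section
/- If ρ(n) denotes the maximal absolute value of the determinant of an n×n matrix with entries in {0,1}, then ρ(n) ≤ 2·((√(n+1))/2)^{n+1}. -/
lemma my_trace_eq {ι : Type*} [Fintype ι] [DecidableEq ι] {M : Matrix ι ι ℝ}
    (hM : M.IsHermitian) : M.trace = ∑ i, hM.eigenvalues i := by
  conv_lhs => rw [hM.spectral_theorem]
  rw [Unitary.conjStarAlgAut_apply, Matrix.trace_mul_comm, ← Matrix.mul_assoc,
    (Matrix.mem_unitaryGroup_iff').mp (hM.eigenvectorUnitary).2, Matrix.one_mul,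
    Matrix.trace_diagonal]
  simp

lemma my_hadamard {ι : Type*} [Fintype ι] [DecidableEq ι] (B : Matrix ι ι ℝ)
    (hc : 0 < Fintype.card ι) (hB : ∀ i j, |B i j| ≤ 1) :
    |B.det| ≤ Real.sqrt (Fintype.card ι) ^ Fintype.card ι := by
  set m := Fintype.card ι with hm
  have hPSD : (B * B.conjTranspose).PosSemidef := Matrix.posSemidef_self_mul_conjTranspose B
  set lam := hPSD.1.eigenvalues with hlam
  have hlamnn : ∀ i, 0 ≤ lam i := hPSD.eigenvalues_nonneg
  have hdet : (B.det) ^ 2 = ∏ i, lam i := by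
    have := hPSD.1.det_eq_prod_eigenvalues
    rw [Matrix.det_mul, Matrix.det_conjTranspose] at this
    simpa [sq, starRingEnd_apply, lam] using this
  have htr : (B * B.conjTranspose).trace ≤ (m : ℝ) * m := by
    rw [Matrix.trace]
    have : ∀ i, (B * B.conjTranspose).diag i ≤ (m : ℝ) := by
      intro i
      simp only [Matrix.diag_apply, Matrix.mul_apply, Matrix.conjTranspose_apply,
        RCLike.star_def, starRingEnd_apply, star_trivial]
      calc ∑ j, B i j * B i j ≤ ∑ _j : ι, (1:ℝ) := by
            apply Finset.sum_le_sum
            intro j _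
            have := hB i j
            nlinarith [abs_nonneg (B i j), sq_abs (B i j)]
        _ = (m : ℝ) := by simp [hm]
    calc ∑ i, (B * B.conjTranspose).diag i ≤ ∑ _i : ι, (m:ℝ) := Finset.sum_le_sum fun i _ => this i
      _ = (m : ℝ) * m := by simp [hm, mul_comm]
  have hsum : ∑ i, lam i ≤ (m : ℝ) * m := by
    rw [← my_trace_eq hPSD.1]; exact htr
  -- AM-GM
  have hmR : (0:ℝ) < m := by exact_mod_cast hc
  have hamgm : ∏ i, (lam i) ^ ((m : ℝ)⁻¹) ≤ ∑ i, (m:ℝ)⁻¹ * lam i := by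
    apply Real.geom_mean_le_arith_mean_weighted
    · intro i _; positivity
    · simp [hm, mul_inv_cancel₀ hmR.ne']
      exact mul_inv_cancel₀ (hm ▸ hmR.ne')
    · intro i _; exact hlamnn i
  have hprod : ∏ i, lam i ≤ (m : ℝ) ^ m := by
    have h1 : (∏ i, (lam i) ^ ((m : ℝ)⁻¹)) ^ m ≤ ((m:ℝ)) ^ m := by
      apply pow_le_pow_left₀
      · exact Finset.prod_nonneg fun i _ => Real.rpow_nonneg (hlamnn i) _
      · calc ∏ i, (lam i) ^ ((m : ℝ)⁻¹) ≤ ∑ i, (m:ℝ)⁻¹ * lam i := hamgm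
          _ = (m:ℝ)⁻¹ * ∑ i, lam i := by rw [Finset.mul_sum]
          _ ≤ (m:ℝ)⁻¹ * ((m:ℝ) * m) := by
              exact mul_le_mul_of_nonneg_left hsum (by positivity)
          _ = m := by field_simp
    calc ∏ i, lam i = (∏ i, (lam i) ^ ((m : ℝ)⁻¹)) ^ m := by
          rw [← Finset.prod_pow]
          apply Finset.prod_congr rfl
          intro i _
          rw [← Real.rpow_natCast ((lam i) ^ ((m:ℝ)⁻¹)) m, ← Real.rpow_mul (hlamnn i),
            inv_mul_cancel₀ hmR.ne', Real.rpow_one]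
      _ ≤ (m : ℝ) ^ m := h1
  have : |B.det| = Real.sqrt ((B.det) ^ 2) := by rw [Real.sqrt_sq_eq_abs]
  rw [this, hdet]
  calc Real.sqrt (∏ i, lam i) ≤ Real.sqrt ((m:ℝ) ^ m) := Real.sqrt_le_sqrt hprod
    _ = Real.sqrt m ^ m := by
        rw [← Real.sqrt_sq (by positivity : (0:ℝ) ≤ Real.sqrt (m:ℝ) ^ m)]
        rw [← pow_mul, mul_comm, pow_mul, Real.sq_sqrt hmR.le]

theorem zero_one_det_bound (n : ℕ) (A : Matrix (Fin n) (Fin n) ℝ)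
    (h01 : ∀ k j, A k j = 0 ∨ A k j = 1) :
    |A.det| ≤ 2 * (Real.sqrt ((n : ℝ) + 1) / 2) ^ (n + 1) := by
  set B : Matrix (Fin 1 ⊕ Fin n) (Fin 1 ⊕ Fin n) ℝ :=
    Matrix.fromBlocks 1 (Matrix.of fun _ _ => (1:ℝ)) (Matrix.of fun _ _ => (1:ℝ))
      (Matrix.of fun i j => 1 - 2 * A i j) with hB
  have hdetB : B.det = (-2 : ℝ) ^ n * A.det := by
    rw [hB, Matrix.det_fromBlocks_one₁₁]
    have h2 : ((Matrix.of fun i j => 1 - 2 * A i j) -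
        (Matrix.of fun (_ : Fin n) (_ : Fin 1) => (1:ℝ)) *
        (Matrix.of fun (_ : Fin 1) (_ : Fin n) => (1:ℝ)) : Matrix (Fin n) (Fin n) ℝ)
        = (-2 : ℝ) • A := by
      ext i j
      simp [Matrix.mul_apply]
    rw [h2, Matrix.det_smul]
    simp
  have hent : ∀ i j, |B i j| ≤ 1 := by
    rintro (i | i) (j | j) <;> rw [hB]
    · simp only [Matrix.fromBlocks_apply₁₁, Matrix.one_apply]
      split_ifs <;> norm_num
    · simp
    · simp
    · simp only [Matrix.fromBlocks_apply₂₂, Matrix.of_apply]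
      rcases h01 i j with h | h <;> rw [h] <;> norm_num
  have hcard : Fintype.card (Fin 1 ⊕ Fin n) = n + 1 := by simp [add_comm]
  have hH := my_hadamard B (by rw [hcard]; omega) hent
  rw [hcard] at hH
  have h1 : |B.det| = 2 ^ n * |A.det| := by
    rw [hdetB, abs_mul, abs_pow, abs_neg]
    norm_num
  have h2 : (2:ℝ) ^ n * |A.det| ≤ Real.sqrt ((n : ℝ) + 1) ^ (n + 1) := by
    rw [← h1]
    convert hH using 3
    push_cast
    ring
  have h3 : 2 * (Real.sqrt ((n : ℝ) + 1) / 2) ^ (n + 1)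
      = Real.sqrt ((n : ℝ) + 1) ^ (n + 1) / 2 ^ n := by
    rw [div_pow, pow_succ (2:ℝ) n]
    field_simp
  rw [h3, le_div_iff₀ (by positivity)]
  linarith [h2]
end

section
/- Let T be an n-dimensional simplex in R^n with i vertices in the hyperplane {x_1 = 0} and n+1-i vertices in the hyperplane {x_1 = 1}, where 1 ≤ i ≤ n. For t ∈ [0,1], let M_t be the intersection of T with the hyperplane {x_1 = t}. Then there exists a constant c ≥ 0, independent of t, such that the (n-1)-dimensional volume of M_t equals c·(1-t)^{i-1}·t^{n-i} for all t ∈ (0,1). -/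
open Finset MeasureTheory

namespace SCS

def emb (i : ℕ) {m : ℕ} (j : Fin m) : Fin (m + 2) :=
  Fin.succ (if (j : ℕ) < i - 1 then j.castSucc else j.succ)

lemma emb_val {i m : ℕ} (j : Fin m) :
    (emb i j : ℕ) = if (j : ℕ) < i - 1 then (j : ℕ) + 1 else (j : ℕ) + 2 := by
  unfold emb
  split <;> simp

lemma sum_split {M : Type*} [AddCommMonoid M] {m i : ℕ} (h1 : 1 ≤ i) (h2 : i ≤ m + 1)
    (f : Fin (m + 2) → M) :
    ∑ k, f k = f 0 + f ⟨i, by omega⟩ + ∑ j : Fin m, f (emb i j) := by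
  have hne : (0 : Fin (m+2)) ≠ ⟨i, by omega⟩ := by
    simp [Fin.ext_iff]; omega
  have hinj : Function.Injective (emb i (m := m)) := by
    intro a b hab
    have := congrArg Fin.val hab
    rw [emb_val, emb_val] at this
    have : (a : ℕ) = b := by split at this <;> split at this <;> omega
    exact Fin.ext this
  have himg : (univ : Finset (Fin m)).image (emb i) = univ \ {0, ⟨i, by omega⟩} := by
    ext k
    simp only [mem_image, mem_univ, true_and, mem_sdiff, mem_insert, mem_singleton]
    constructor
    · rintro ⟨j, rfl⟩
      have hv := emb_val (i := i) j
      have hj := j.isLt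
      push_neg
      constructor <;> · simp only [Ne, Fin.ext_iff, Fin.val_zero]; split at hv <;> omega
    · intro hk'
      push_neg at hk'
      obtain ⟨hk0, hki⟩ := hk'
      simp only [Ne, Fin.ext_iff, Fin.val_zero] at hk0 hki
      have hk := k.isLt
      by_cases h : (k : ℕ) < i
      · refine ⟨⟨(k : ℕ) - 1, by omega⟩, ?_⟩
        rw [Fin.ext_iff, emb_val]
        simp only
        rw [if_pos (by omega)]
        omega
      · refine ⟨⟨(k : ℕ) - 2, by omega⟩, ?_⟩
        rw [Fin.ext_iff, emb_val]
        simp only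
        rw [if_neg (by omega)]
        omega
  have hsub : ({0, ⟨i, by omega⟩} : Finset (Fin (m+2))) ⊆ univ := subset_univ _
  calc ∑ k, f k = ∑ k ∈ univ \ {0, ⟨i, by omega⟩}, f k + ∑ k ∈ {0, ⟨i, by omega⟩}, f k :=
        (Finset.sum_sdiff hsub).symm
    _ = f 0 + f ⟨i, by omega⟩ + ∑ j : Fin m, f (emb i j) := by
        rw [← himg, Finset.sum_image (fun a _ b _ h => hinj h), Finset.sum_pair hne]
        abel

lemma card_filter_lt (m r : ℕ) (h : r ≤ m) :
    ((univ : Finset (Fin m)).filter (fun j : Fin m => (j : ℕ) < r)).card = r := by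
  have : (univ : Finset (Fin m)).filter (fun j : Fin m => (j : ℕ) < r)
      = Finset.map (Fin.castLEEmb h) univ := by
    ext k
    simp only [mem_filter, mem_univ, true_and, mem_map, Fin.castLEEmb_apply]
    constructor
    · intro hk; exact ⟨⟨(k : ℕ), hk⟩, by simp [Fin.ext_iff]⟩
    · rintro ⟨a, rfl⟩; simp
  rw [this, Finset.card_map, Finset.card_univ, Fintype.card_fin]

theorem aux (m i : ℕ) (hi1 : 1 ≤ i) (hi2 : i ≤ m + 1)
    (v : Fin (m + 2) → (Fin (m + 1) → ℝ))
    (hvi : ∀ k : Fin (m + 2), ((k : ℕ) < i → v k 0 = 0) ∧ (i ≤ (k : ℕ) → v k 0 = 1)) :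
    ∃ c : ℝ, 0 ≤ c ∧ ∀ t ∈ Set.Ioo (0 : ℝ) 1,
      volume {y : Fin m → ℝ | Fin.cons t y ∈ convexHull ℝ (Set.range v)}
        = ENNReal.ofReal (c * (1 - t) ^ (i - 1) * t ^ (m + 1 - i)) := by
  classical
  set k0 : Fin (m + 2) := 0 with hk0def
  set k1 : Fin (m + 2) := ⟨i, by omega⟩ with hk1def
  set side : Fin m → Prop := fun j => (j : ℕ) < i - 1 with hside
  set S0 : Finset (Fin m) := univ.filter side with hS0
  set S1 : Finset (Fin m) := univ.filter (fun j => ¬ side j) with hS1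
  set bse : Fin m → Fin (m + 2) := fun j => if side j then k0 else k1 with hbse
  set d : Fin m → (Fin (m + 1) → ℝ) := fun j => v (emb i j) - v (bse j) with hd
  set Mat : Matrix (Fin m) (Fin m) ℝ := Matrix.of fun p q => d q p.succ with hMat
  set K : Set (Fin m → ℝ) :=
    {y | (∀ j, 0 ≤ y j) ∧ ∑ j ∈ S0, y j ≤ 1 ∧ ∑ j ∈ S1, y j ≤ 1} with hK
  -- basic facts
  have hvk0 : v k0 0 = 0 := (hvi k0).1 (by simp [hk0def]; omega)
  have hvk1 : v k1 0 = 1 := (hvi k1).2 (by simp [hk1def])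
  have hvemb : ∀ j : Fin m, v (emb i j) 0 = if side j then 0 else 1 := by
    intro j
    have hev := emb_val (i := i) j
    by_cases h : side j
    · rw [if_pos h]
      exact (hvi _).1 (by rw [hev, if_pos h]; simp only [hside] at h; omega)
    · rw [if_neg h]
      exact (hvi _).2 (by rw [hev, if_neg h]; simp only [hside] at h ⊢; omega)
  have hd0 : ∀ j, d j 0 = 0 := by
    intro j
    simp only [hd, Pi.sub_apply, hvemb j, hbse]
    by_cases h : side j <;> simp [h, hvk0, hvk1]
  -- finiteness of K
  have hKfin : volume K ≠ ⊤ := by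
    have hsub : K ⊆ Set.pi Set.univ (fun _ : Fin m => Set.Icc (0:ℝ) 1) := by
      rintro y ⟨hy0, hyS0, hyS1⟩ j _
      refine ⟨hy0 j, ?_⟩
      by_cases h : side j
      · calc y j ≤ ∑ p ∈ S0, y p :=
              Finset.single_le_sum (fun p _ => hy0 p) (by simp [hS0, h])
          _ ≤ 1 := hyS0
      · calc y j ≤ ∑ p ∈ S1, y p :=
              Finset.single_le_sum (fun p _ => hy0 p) (by simp [hS1, h])
          _ ≤ 1 := hyS1
    have hbox : volume (Set.pi Set.univ (fun _ : Fin m => Set.Icc (0:ℝ) 1)) = 1 := by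
      rw [volume_pi_pi]
      simp [Real.volume_Icc]
    exact ne_top_of_le_ne_top (by rw [hbox]; exact ENNReal.one_ne_top) (measure_mono hsub)
  have hcard0 : S0.card = i - 1 := card_filter_lt m (i-1) (by omega)
  have hcard1 : S1.card = m + 1 - i := by
    have key := Finset.card_filter_add_card_filter_not (s := (univ : Finset (Fin m)))
      (p := side)
    rw [Finset.card_univ, Fintype.card_fin] at key
    have key2 : S0.card + S1.card = m := key
    omega
  refine ⟨|Mat.det| * (volume K).toReal, by positivity, ?_⟩
  rintro t ⟨ht0, ht1⟩
  set cc : Fin m → ℝ := fun j => if side j then 1 - t else t with hcc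
  have hccpos : ∀ j, 0 < cc j := by
    intro j; rw [hcc]; dsimp only; split <;> [linarith; exact ht0]
  set Gt : (Fin m → ℝ) → (Fin (m + 1) → ℝ) :=
    fun y => (1 - t) • v k0 + t • v k1 + ∑ j, (cc j * y j) • d j with hGt
  have hGt0 : ∀ y, Gt y 0 = t := by
    intro y
    simp only [hGt, Pi.add_apply, Pi.smul_apply, Finset.sum_apply, smul_eq_mul,
      hvk0, hvk1]
    simp [hd0]
  -- the key algebraic identity
  have hGsum : ∀ u : Fin m → ℝ,
      (1 - t) • v k0 + t • v k1 + ∑ j, u j • d j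
      = ((1 - t) - ∑ j ∈ S0, u j) • v k0 + (t - ∑ j ∈ S1, u j) • v k1
        + ∑ j, u j • v (emb i j) := by
    intro u
    have hb : ∑ j, u j • v (bse j)
        = (∑ j ∈ S0, u j) • v k0 + (∑ j ∈ S1, u j) • v k1 := by
      rw [← Finset.sum_filter_add_sum_filter_not univ side]
      rw [← hS0, ← hS1]
      congr 1
      · rw [Finset.sum_smul]
        refine Finset.sum_congr rfl fun j hj => ?_
        rw [hS0, mem_filter] at hj
        simp [hbse, hj.2]
      · rw [Finset.sum_smul]
        refine Finset.sum_congr rfl fun j hj => ?_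
        rw [hS1, mem_filter] at hj
        simp [hbse, hj.2]
    have : ∑ j, u j • d j = ∑ j, u j • v (emb i j) - ∑ j, u j • v (bse j) := by
      rw [← Finset.sum_sub_distrib]
      exact Finset.sum_congr rfl fun j _ => by rw [hd]; exact smul_sub _ _ _
    rw [this, hb, sub_smul, sub_smul]
    module
  have h1t : (0:ℝ) < 1 - t := by linarith
  have hSS : ∀ (f : Fin (m + 2) → ℝ), ∑ k, f k = f k0 + f k1 + ∑ j, f (emb i j) :=
    fun f => sum_split hi1 hi2 f
  have hSSv : ∀ (f : Fin (m + 2) → (Fin (m + 1) → ℝ)),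
      ∑ k, f k = f k0 + f k1 + ∑ j, f (emb i j) := fun f => sum_split hi1 hi2 f
  -- the set identity
  have hset : {y : Fin m → ℝ | Fin.cons t y ∈ convexHull ℝ (Set.range v)}
      = (fun y => Fin.tail (Gt y)) '' K := by
    ext y'
    simp only [Set.mem_setOf_eq, Set.mem_image]
    constructor
    · intro hy'
      rw [convexHull_range_eq_exists_affineCombination] at hy'
      obtain ⟨s, w, hw0, hw1, hwx⟩ := hy'
      set w' : Fin (m + 2) → ℝ := fun k => if k ∈ s then w k else 0 with hw'
      have hw'0 : ∀ k, 0 ≤ w' k := by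
        intro k; rw [hw']; dsimp only; split
        · exact hw0 _ ‹_›
        · exact le_refl 0
      have hw'sum : ∑ k, w' k = 1 := by
        rw [hw']; rw [Finset.sum_ite_mem, Finset.univ_inter]; exact hw1
      have hw'x : ∑ k, w' k • v k = Fin.cons t y' := by
        have : ∑ k, w' k • v k = ∑ k ∈ s, w k • v k := by
          simp only [hw', ite_smul, zero_smul, Finset.sum_ite_mem, Finset.univ_inter]
        rw [this, ← affineCombination_eq_linear_combination s v w hw1]
        exact hwx
      set u : Fin m → ℝ := fun j => w' (emb i j) with hu
      have husum : ∑ j, u j = ∑ j ∈ S0, u j + ∑ j ∈ S1, u j :=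
        (Finset.sum_filter_add_sum_filter_not univ side u).symm
      have hsum1' : w' k0 + w' k1 + ∑ j, u j = 1 := by rw [← hSS w']; exact hw'sum
      have hco1 : w' k1 + ∑ j ∈ S1, u j = t := by
        have happ := congrFun hw'x 0
        rw [Finset.sum_apply] at happ
        simp only [Pi.smul_apply, smul_eq_mul, Fin.cons_zero] at happ
        rw [hSS (fun k => w' k * v k 0)] at happ
        simp only [hvk0, hvk1, mul_zero, mul_one, zero_add, hvemb] at happ
        have hsp : ∑ j, w' (emb i j) * (if side j then 0 else 1) = ∑ j ∈ S1, u j := by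
          rw [hS1, Finset.sum_filter]
          refine Finset.sum_congr rfl fun j _ => ?_
          by_cases h : side j <;> simp [h, hu]
        rw [hsp] at happ
        exact happ
      have hco0 : w' k0 + ∑ j ∈ S0, u j = 1 - t := by linarith
      have hu0 : ∀ j, 0 ≤ u j := fun j => hw'0 _
      set y : Fin m → ℝ := fun j => u j / cc j with hy
      have hcy : ∀ j, cc j * y j = u j := by
        intro j; rw [hy]; dsimp only; rw [mul_comm]
        exact div_mul_cancel₀ _ (hccpos j).ne'
      have hyS0sum : ∑ j ∈ S0, y j = (∑ j ∈ S0, u j) / (1 - t) := by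
        rw [Finset.sum_div]
        refine Finset.sum_congr rfl fun j hj => ?_
        rw [hS0, mem_filter] at hj
        rw [hy]; dsimp only; rw [hcc]; dsimp only; rw [if_pos hj.2]
      have hyS1sum : ∑ j ∈ S1, y j = (∑ j ∈ S1, u j) / t := by
        rw [Finset.sum_div]
        refine Finset.sum_congr rfl fun j hj => ?_
        rw [hS1, mem_filter] at hj
        rw [hy]; dsimp only; rw [hcc]; dsimp only; rw [if_neg hj.2]
      refine ⟨y, ⟨fun j => div_nonneg (hu0 j) (hccpos j).le, ?_, ?_⟩, ?_⟩
      · rw [hyS0sum, div_le_one h1t]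
        have := hw'0 k0; linarith
      · rw [hyS1sum, div_le_one ht0]
        have := hw'0 k1; linarith
      · have hGty : Gt y = Fin.cons t y' := by
          calc Gt y = (1 - t) • v k0 + t • v k1 + ∑ j, u j • d j := by
                simp only [hGt]
                congr 1
                exact Finset.sum_congr rfl fun j _ => by rw [hcy j]
            _ = (1 - t - ∑ j ∈ S0, u j) • v k0 + (t - ∑ j ∈ S1, u j) • v k1
                + ∑ j, u j • v (emb i j) := hGsum u
            _ = w' k0 • v k0 + w' k1 • v k1 + ∑ j, w' (emb i j) • v (emb i j) := by
                rw [show (1 - t - ∑ j ∈ S0, u j) = w' k0 by linarith,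
                  show (t - ∑ j ∈ S1, u j) = w' k1 by linarith]
            _ = ∑ k, w' k • v k := (hSSv (fun k => w' k • v k)).symm
            _ = Fin.cons t y' := hw'x
        rw [hGty, Fin.tail_cons]
    · rintro ⟨y, ⟨hy0, hyS0, hyS1⟩, rfl⟩
      have hcons : Fin.cons t (Fin.tail (Gt y)) = Gt y := by
        conv_lhs => rw [← hGt0 y]
        exact Fin.cons_self_tail (Gt y)
      rw [hcons]
      set u : Fin m → ℝ := fun j => cc j * y j with hu
      have hu0 : ∀ j, 0 ≤ u j := fun j => mul_nonneg (hccpos j).le (hy0 j)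
      have hsum0 : ∑ j ∈ S0, u j = (1 - t) * ∑ j ∈ S0, y j := by
        rw [Finset.mul_sum]
        refine Finset.sum_congr rfl fun j hj => ?_
        rw [hS0, mem_filter] at hj
        rw [hu]; dsimp only; rw [hcc]; dsimp only; rw [if_pos hj.2]
      have hsum1 : ∑ j ∈ S1, u j = t * ∑ j ∈ S1, y j := by
        rw [Finset.mul_sum]
        refine Finset.sum_congr rfl fun j hj => ?_
        rw [hS1, mem_filter] at hj
        rw [hu]; dsimp only; rw [hcc]; dsimp only; rw [if_neg hj.2]
      set W : Bool ⊕ Fin m → ℝ :=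
        Sum.elim (fun b => if b then t - ∑ j ∈ S1, u j else 1 - t - ∑ j ∈ S0, u j) u with hW
      set z : Bool ⊕ Fin m → (Fin (m + 1) → ℝ) :=
        Sum.elim (fun b => if b then v k1 else v k0) (fun j => v (emb i j)) with hz
      have hWz : ∑ p, W p • z p = Gt y := by
        calc ∑ p, W p • z p
            = ((t - ∑ j ∈ S1, u j) • v k1 + (1 - t - ∑ j ∈ S0, u j) • v k0)
              + ∑ j, u j • v (emb i j) := by
              rw [Fintype.sum_sum_type, Fintype.sum_bool]
              simp [hW, hz]
          _ = (1 - t - ∑ j ∈ S0, u j) • v k0 + (t - ∑ j ∈ S1, u j) • v k1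
              + ∑ j, u j • v (emb i j) := by abel
          _ = (1 - t) • v k0 + t • v k1 + ∑ j, u j • d j := (hGsum u).symm
          _ = Gt y := by simp only [hGt]; rfl
      rw [← hWz]
      refine (convex_convexHull ℝ _).sum_mem ?_ ?_ ?_
      · rintro (b | j) _
        · cases b
          · simp only [hW, Sum.elim_inl, Bool.false_eq_true, if_false]
            rw [hsum0]
            nlinarith
          · simp only [hW, Sum.elim_inl, if_true]
            rw [hsum1]
            nlinarith
        · exact hu0 j
      · rw [Fintype.sum_sum_type, Fintype.sum_bool]
        simp only [hW, Sum.elim_inl, Sum.elim_inr, Bool.false_eq_true, if_true, if_false]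
        have := Finset.sum_filter_add_sum_filter_not univ side u
        have h2 : ∑ j ∈ S0, u j + ∑ j ∈ S1, u j = ∑ j, u j := this
        linarith
      · rintro (b | j) _
        · cases b <;>
            · simp only [hz, Sum.elim_inl, Bool.false_eq_true, if_true, if_false]
              exact subset_convexHull ℝ _ ⟨_, rfl⟩
        · exact subset_convexHull ℝ _ ⟨_, rfl⟩
  -- the affine expression for the map
  have hgaff : ∀ y : Fin m → ℝ, Fin.tail (Gt y)
      = Fin.tail ((1 - t) • v k0 + t • v k1)
        + Matrix.toLin' (Mat * Matrix.diagonal cc) y := by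
    intro y
    funext p
    simp only [Fin.tail, Pi.add_apply, Matrix.toLin'_apply, Matrix.mulVec, dotProduct,
      Matrix.mul_diagonal, hGt, Pi.smul_apply, Finset.sum_apply, smul_eq_mul, hMat,
      Matrix.of_apply]
    congr 1
    exact Finset.sum_congr rfl fun q _ => by ring
  -- volume computation
  set A : (Fin m → ℝ) →ₗ[ℝ] (Fin m → ℝ) := Matrix.toLin' (Mat * Matrix.diagonal cc) with hA
  set b : Fin m → ℝ := Fin.tail ((1 - t) • v k0 + t • v k1) with hb
  have himg : (fun y => Fin.tail (Gt y)) '' K = (fun z => b +ᵥ z) '' (A '' K) := by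
    rw [Set.image_image]
    exact Set.image_congr fun y _ => hgaff y
  rw [hset, himg, Set.image_vadd, measure_vadd, Measure.addHaar_image_linearMap]
  have hdet : LinearMap.det A = Mat.det * ((1 - t) ^ (i - 1) * t ^ (m + 1 - i)) := by
    rw [hA, LinearMap.det_toLin', Matrix.det_mul, Matrix.det_diagonal]
    congr 1
    rw [← Finset.prod_filter_mul_prod_filter_not univ side]
    have h0 : ∏ j ∈ S0, cc j = (1 - t) ^ (i - 1) := by
      rw [← hcard0]
      rw [Finset.prod_congr rfl (fun j hj => ?_), Finset.prod_const]
      rw [hS0, mem_filter] at hj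
      simp [hcc, hj.2]
    have h1 : ∏ j ∈ S1, cc j = t ^ (m + 1 - i) := by
      rw [← hcard1]
      rw [Finset.prod_congr rfl (fun j hj => ?_), Finset.prod_const]
      rw [hS1, mem_filter] at hj
      simp [hcc, hj.2]
    have e0 : (univ.filter side) = S0 := rfl
    have e1 : (univ.filter (fun j => ¬ side j)) = S1 := rfl
    rw [e0, e1, h0, h1]
  have h1t : (0:ℝ) < 1 - t := by linarith
  rw [hdet, abs_mul, abs_of_pos (by positivity : (0:ℝ) < (1 - t) ^ (i - 1) * t ^ (m + 1 - i))]
  conv_lhs => rw [← ENNReal.ofReal_toReal hKfin]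
  rw [← ENNReal.ofReal_mul (by positivity)]
  congr 1
  ring

end SCS

/-- Cross-section volume of a simplex between two hyperplanes.
Here the dimension is `n = m + 1` (so `n ≥ 1`); the simplex `T` lives in
`ℝ^n = Fin (m+1) → ℝ`, has `n + 1` vertices `v k`, `i` of which lie in the
hyperplane `x_1 = 0` and the remaining `n + 1 - i` in `x_1 = 1`.
The cross-section at height `t` is identified with a subset of
`ℝ^{n-1} = Fin m → ℝ` via `y ↦ Fin.cons t y`. -/
theorem simplex_cross_section_volume (m : ℕ) (i : ℕ) (hi1 : 1 ≤ i) (hi2 : i ≤ m + 1)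
    (v : Fin (m + 2) → (Fin (m + 1) → ℝ))
    (hv : AffineIndependent ℝ v)
    (h01 : ∀ k, v k 0 = 0 ∨ v k 0 = 1)
    (hcard : (univ.filter (fun k => v k 0 = 0)).card = i) :
    ∃ c : ℝ, 0 ≤ c ∧ ∀ t ∈ Set.Ioo (0 : ℝ) 1,
      volume {y : Fin m → ℝ | Fin.cons t y ∈ convexHull ℝ (Set.range v)}
        = ENNReal.ofReal (c * (1 - t) ^ (i - 1) * t ^ (m + 1 - i)) := by
  classical
  set p : Fin (m + 2) → Prop := fun k => (k : ℕ) < i with hp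
  set q : Fin (m + 2) → Prop := fun k => v k 0 = 0 with hq
  have hcardp : (univ.filter p).card = i := SCS.card_filter_lt (m + 2) i (by omega)
  have hce : Fintype.card {k // p k} = Fintype.card {k // q k} := by
    rw [Fintype.card_subtype, Fintype.card_subtype, hcardp, hcard]
  have hce' : Fintype.card {k // ¬ p k} = Fintype.card {k // ¬ q k} := by
    rw [Fintype.card_subtype_compl, Fintype.card_subtype_compl, hce]
  set e1 : {k // p k} ≃ {k // q k} := Fintype.equivOfCardEq hce with he1
  set e2 : {k // ¬ p k} ≃ {k // ¬ q k} := Fintype.equivOfCardEq hce' with he2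
  set σ : Equiv.Perm (Fin (m + 2)) := Equiv.subtypeCongr e1 e2 with hσdef
  have hσ : ∀ k, (p k → q (σ k)) ∧ (¬ p k → ¬ q (σ k)) := by
    intro k
    constructor
    · intro hk
      have : σ k = (e1 ⟨k, hk⟩ : Fin (m + 2)) := by
        simp [hσdef, Equiv.subtypeCongr, Equiv.sumCompl_symm_apply_of_pos hk]
      rw [this]
      exact (e1 ⟨k, hk⟩).2
    · intro hk
      have : σ k = (e2 ⟨k, hk⟩ : Fin (m + 2)) := by
        simp [hσdef, Equiv.subtypeCongr, Equiv.sumCompl_symm_apply_of_neg hk]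
      rw [this]
      exact (e2 ⟨k, hk⟩).2
  have hvi : ∀ k : Fin (m + 2), ((k : ℕ) < i → (v ∘ σ) k 0 = 0) ∧
      (i ≤ (k : ℕ) → (v ∘ σ) k 0 = 1) := by
    intro k
    constructor
    · intro hk
      exact (hσ k).1 hk
    · intro hk
      have hnq := (hσ k).2 (by omega)
      rcases h01 (σ k) with h | h
      · exact absurd h hnq
      · exact h
  obtain ⟨c, hc0, hc⟩ := SCS.aux m i hi1 hi2 (v ∘ σ) hvi
  refine ⟨c, hc0, ?_⟩
  intro t ht
  rw [show Set.range v = Set.range (v ∘ σ) from (σ.surjective.range_comp v).symm]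
  exact hc t ht
end

section
/- Define E(n) = n!/(2·((√(n+1))/2)^{n+1}) and F(n) = (n+1)^{(n-1)/2}. Then the limit as n → ∞ of (F(n)/E(n))^{1/n} equals e/2. -/
open Filter Real

lemma ratio_bounds_X_eq (n : ℕ) :
    ((((n : ℝ) + 1) ^ (((n : ℝ) - 1) / 2)) /
        ((Nat.factorial n : ℝ) / (2 * (Real.sqrt ((n : ℝ) + 1) / 2) ^ (n + 1))))
      = ((n : ℝ) + 1) ^ ((n : ℝ)) / (2 ^ n * Nat.factorial n) := by
  have hpos : (0:ℝ) < (n : ℝ) + 1 := by positivity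
  have hs : (Real.sqrt ((n : ℝ) + 1)) ^ (n + 1) = ((n : ℝ) + 1) ^ ((((n:ℝ) + 1)) / 2) := by
    rw [Real.sqrt_eq_rpow, ← Real.rpow_natCast (((n:ℝ)+1) ^ ((1:ℝ)/2)) (n+1),
      ← Real.rpow_mul hpos.le]
    push_cast
    ring_nf
  have hfac : (0:ℝ) < Nat.factorial n := by positivity
  have hsplit : ((n:ℝ)+1) ^ ((n:ℝ)) =
      ((n:ℝ)+1) ^ (((n:ℝ)-1)/2) * ((n:ℝ)+1) ^ (((n:ℝ)+1)/2) := by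
    rw [← Real.rpow_add hpos]; ring_nf
  have h1 : ((n:ℝ)+1) ^ (((n:ℝ)+1)/2) ≠ 0 := (Real.rpow_pos_of_pos hpos _).ne'
  have h2 : ((n:ℝ)+1) ^ (((n:ℝ)-1)/2) ≠ 0 := (Real.rpow_pos_of_pos hpos _).ne'
  rw [div_pow, hs, hsplit, pow_succ]
  field_simp

lemma ratio_bounds_log_lim :
    Tendsto (fun n : ℕ =>
      (Real.log (↑n + 1) - Real.log ↑n) + 1 - Real.log 2
        - Real.log (Stirling.stirlingSeq n) / n - Real.log (2 * ↑n) / (2 * ↑n))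
      atTop (nhds (1 - Real.log 2)) := by
  have h1 : Tendsto (fun n : ℕ => Real.log (↑n + 1) - Real.log ↑n) atTop (nhds 0) :=
    Real.tendsto_log_nat_add_one_sub_log
  have h2 : Tendsto (fun n : ℕ => Real.log (Stirling.stirlingSeq n) / n) atTop (nhds 0) := by
    have hs : Tendsto (fun n : ℕ => Real.log (Stirling.stirlingSeq n)) atTop
        (nhds (Real.log (Real.sqrt π))) :=
      ((Real.continuousAt_log (by positivity)).tendsto).comp Stirling.tendsto_stirlingSeq_sqrt_pi
    exact hs.div_atTop tendsto_natCast_atTop_atTop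
  have h3 : Tendsto (fun n : ℕ => Real.log (2 * ↑n) / (2 * ↑n)) atTop (nhds 0) := by
    have := (Real.tendsto_pow_log_div_mul_add_atTop 1 0 1 one_ne_zero).comp
      (tendsto_natCast_atTop_atTop.const_mul_atTop (by norm_num : (0:ℝ) < 2))
    simpa [Function.comp_def] using this
  have := ((((h1.add_const 1).sub_const (Real.log 2)).sub h2).sub h3)
  simpa using this

/-- Comparison of the new bound `F(n) = (n+1)^{(n-1)/2}` with the Euclidean
bound `E(n) = n!/(2(√(n+1)/2)^{n+1})`: `(F(n)/E(n))^{1/n} → e/2`. -/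
theorem ratio_of_bounds_tendsto_e_div_two :
    Filter.Tendsto
      (fun n : ℕ =>
        ((((n : ℝ) + 1) ^ (((n : ℝ) - 1) / 2)) /
            ((Nat.factorial n : ℝ) / (2 * (Real.sqrt ((n : ℝ) + 1) / 2) ^ (n + 1))))
          ^ ((1 : ℝ) / n))
      Filter.atTop (nhds (Real.exp 1 / 2)) := by
  have hlim : Tendsto (fun n : ℕ => Real.exp
      ((Real.log (↑n + 1) - Real.log ↑n) + 1 - Real.log 2
        - Real.log (Stirling.stirlingSeq n) / n - Real.log (2 * ↑n) / (2 * ↑n)))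
      atTop (nhds (Real.exp (1 - Real.log 2))) :=
    (Real.continuous_exp.tendsto _).comp ratio_bounds_log_lim
  have hval : Real.exp (1 - Real.log 2) = Real.exp 1 / 2 := by
    rw [Real.exp_sub, Real.exp_log two_pos]
  rw [hval] at hlim
  refine hlim.congr' ?_
  filter_upwards [eventually_ge_atTop 1] with n hn
  have hn0 : (0:ℝ) < (n:ℝ) := by exact_mod_cast hn
  have hpos : (0:ℝ) < (n : ℝ) + 1 := by positivity
  have hXpos : (0:ℝ) < ((n : ℝ) + 1) ^ ((n : ℝ)) / (2 ^ n * Nat.factorial n) := by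
    have := Real.rpow_pos_of_pos hpos (n:ℝ)
    have hf : (0:ℝ) < Nat.factorial n := by positivity
    positivity
  rw [ratio_bounds_X_eq, Real.rpow_def_of_pos hXpos]
  congr 1
  have hfacne : ((Nat.factorial n : ℝ)) ≠ 0 := by positivity
  have h2ne : ((2:ℝ) ^ n) ≠ 0 := by positivity
  have hlogX : Real.log (((n:ℝ)+1) ^ ((n:ℝ)) / (2 ^ n * Nat.factorial n))
      = (n:ℝ) * Real.log ((n:ℝ)+1) - ((n:ℝ) * Real.log 2 + Real.log (Nat.factorial n)) := by
    rw [Real.log_div (Real.rpow_pos_of_pos hpos _).ne' (by positivity),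
      Real.log_rpow hpos, Real.log_mul h2ne hfacne, Real.log_pow]
  have hloge : Real.log ((n:ℝ) / Real.exp 1) = Real.log (n:ℝ) - 1 := by
    rw [Real.log_div hn0.ne' (Real.exp_ne_zero 1), Real.log_exp]
  have hfact : Real.log (Nat.factorial n : ℝ)
      = Real.log (Stirling.stirlingSeq n) + 1 / 2 * Real.log (2 * (n:ℝ))
        + (n:ℝ) * (Real.log (n:ℝ) - 1) := by
    have h := Stirling.log_stirlingSeq_formula n
    rw [hloge] at h
    linarith
  rw [hlogX, hfact]
  field_simp
  ring
end
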